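/- Let T_s be the tent map with s ∈ (√2,2]. If the critical point c = 1/2 is non-recurrent (i.e. there is ε > 0 with |c − cₙ| ≥ ε for all n ≥ 1), then T_s is long-branched: there exists δ > 0 such that for every n ∈ ℕ and every pair of adjacent turning points x, y of T_sⁿ, one has |T_sⁿ(x) − T_sⁿ(y)| > δ. -/

import Mathlib

noncomputable def tent (s : ℝ) : ℝ → ℝ := fun x => min (s * x) (s * (1 - x))

def IsTurningPoint (s : ℝ) (r : ℕ) (x : ℝ) : Prop :=
  ∃ m : ℕ, m < r ∧ (tent s)^[m] x = 1/2

/-- `x < y` are adjacent turning points of `T_s^n` if both are turning points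
and `T_s^n` is monotone on `[x,y]`. -/
def AdjacentTurningPoints (s : ℝ) (n : ℕ) (x y : ℝ) : Prop :=
  x < y ∧ IsTurningPoint s n x ∧ IsTurningPoint s n y ∧
    (MonotoneOn ((tent s)^[n]) (Set.Icc x y) ∨
      AntitoneOn ((tent s)^[n]) (Set.Icc x y))

lemma tent_of_le (s x : ℝ) (hs : 0 ≤ s) (hx : x ≤ 1/2) : tent s x = s * x := by
  unfold tent
  exact min_eq_left (by nlinarith)

lemma tent_of_ge (s x : ℝ) (hs : 0 ≤ s) (hx : 1/2 ≤ x) : tent s x = s * (1 - x) := by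
  unfold tent
  exact min_eq_right (by nlinarith)

lemma tent_symm (s u : ℝ) : tent s (1/2 - u) = tent s (1/2 + u) := by
  unfold tent
  have h1 : (1 : ℝ) - (1/2 - u) = 1/2 + u := by ring
  have h2 : (1 : ℝ) - (1/2 + u) = 1/2 - u := by ring
  rw [h1, h2, min_comm]

/-- No iterate of the tent map is constant on a nondegenerate interval. -/
lemma tent_not_const (s : ℝ) (hs : 0 < s) :
    ∀ n (a b : ℝ), a < b →
      (∀ z ∈ Set.Icc a b, (tent s)^[n] z = (tent s)^[n] a) → False := by
  intro n
  induction n with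
  | zero =>
    intro a b hab h
    have := h b ⟨hab.le, le_refl b⟩
    simp at this
    linarith
  | succ n ih =>
    intro a b hab h
    by_cases hb : b ≤ 1/2
    · -- left branch: tent = s * ·
      have ha : a ≤ 1/2 := hab.le.trans hb
      refine ih (s * a) (s * b) (by nlinarith) ?_
      intro w hw
      obtain ⟨hw1, hw2⟩ := hw
      have hzmem : w / s ∈ Set.Icc a b :=
        ⟨(le_div_iff₀ hs).2 (by linarith [hw1]), (div_le_iff₀ hs).2 (by linarith [hw2])⟩
      have hzle : w / s ≤ 1/2 := hzmem.2.trans hb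
      have hTz : tent s (w / s) = w := by
        rw [tent_of_le s _ hs.le hzle]
        field_simp
      have e1 : (tent s)^[n] w = (tent s)^[n + 1] (w / s) := by
        rw [Function.iterate_succ_apply, hTz]
      have e2 : (tent s)^[n] (s * a) = (tent s)^[n + 1] a := by
        rw [Function.iterate_succ_apply, tent_of_le s a hs.le ha]
      rw [e1, e2, h (w / s) hzmem]
    · -- use right part [max a (1/2), b]
      push_neg at hb
      set a' := max a (1/2) with ha'def
      have ha'1 : 1/2 ≤ a' := le_max_right _ _
      have ha'2 : a ≤ a' := le_max_left _ _
      have ha'b : a' < b := max_lt hab hb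
      refine ih (s * (1 - b)) (s * (1 - a')) (by nlinarith) ?_
      intro w hw
      obtain ⟨hw1, hw2⟩ := hw
      have hz1 : a' ≤ 1 - w / s := by
        have : w / s ≤ 1 - a' := (div_le_iff₀ hs).2 (by linarith [hw2])
        linarith
      have hz2 : 1 - w / s ≤ b := by
        have : 1 - b ≤ w / s := (le_div_iff₀ hs).2 (by linarith [hw1])
        linarith
      have hzmem : 1 - w / s ∈ Set.Icc a b := ⟨ha'2.trans hz1, hz2⟩
      have hTz : tent s (1 - w / s) = w := by
        rw [tent_of_ge s _ hs.le (ha'1.trans hz1)]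
        field_simp
        ring
      have e1 : (tent s)^[n] w = (tent s)^[n + 1] (1 - w / s) := by
        rw [Function.iterate_succ_apply, hTz]
      have e2 : (tent s)^[n] (s * (1 - b)) = (tent s)^[n + 1] b := by
        rw [Function.iterate_succ_apply, tent_of_ge s b hs.le hb.le]
      rw [e1, e2, h (1 - w / s) hzmem, h b ⟨hab.le, le_refl b⟩]

/-- A monotone branch of `T^n`, `n ≥ 1`, cannot strictly straddle the critical point. -/
lemma tent_no_straddle (s : ℝ) (hs : 0 < s) (n : ℕ) (hn : 1 ≤ n) (x y : ℝ)
    (hx : x < 1/2) (hy : 1/2 < y)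
    (H : MonotoneOn ((tent s)^[n]) (Set.Icc x y) ∨
      AntitoneOn ((tent s)^[n]) (Set.Icc x y)) : False := by
  obtain ⟨k, rfl⟩ : ∃ k, n = k + 1 := ⟨n - 1, (Nat.succ_pred_eq_of_pos hn).symm⟩
  have hsymm : ∀ u : ℝ, (tent s)^[k+1] (1/2 - u) = (tent s)^[k+1] (1/2 + u) := by
    intro u
    rw [Function.iterate_succ_apply, Function.iterate_succ_apply, tent_symm]
  set t := min (1/2 - x) (y - 1/2) with htdef
  have ht : 0 < t := lt_min (by linarith) (by linarith)
  have ht1 : t ≤ 1/2 - x := min_le_left _ _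
  have ht2 : t ≤ y - 1/2 := min_le_right _ _
  have hmem : ∀ u : ℝ, 0 ≤ u → u ≤ t → (1/2 - u) ∈ Set.Icc x y ∧ (1/2 + u) ∈ Set.Icc x y := by
    intro u h0 h1
    exact ⟨⟨by linarith, by linarith⟩, ⟨by linarith, by linarith⟩⟩
  have hconst : ∀ z ∈ Set.Icc (1/2 - t) (1/2 : ℝ),
      (tent s)^[k+1] z = (tent s)^[k+1] (1/2 - t) := by
    intro z hz
    obtain ⟨hz1, hz2⟩ := hz
    have hu0 : 0 ≤ 1/2 - z := by linarith
    have hut : 1/2 - z ≤ t := by linarith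
    obtain ⟨hm1, hm2⟩ := hmem (1/2 - z) hu0 hut
    obtain ⟨hM1, hM2⟩ := hmem t ht.le (le_refl t)
    have hzz : (1:ℝ)/2 - (1/2 - z) = z := by ring
    have ez : (tent s)^[k+1] z = (tent s)^[k+1] (1/2 + (1/2 - z)) := by
      rw [← hsymm (1/2 - z), hzz]
    rw [hzz] at hm1
    rcases H with H | H
    · have h1 : (tent s)^[k+1] (1/2 - t) ≤ (tent s)^[k+1] z :=
        H hM1 hm1 (by linarith)
      have h2 : (tent s)^[k+1] z ≤ (tent s)^[k+1] (1/2 - t) := by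
        rw [ez, hsymm t]
        exact H hm2 hM2 (by linarith)
      linarith
    · have h1 : (tent s)^[k+1] z ≤ (tent s)^[k+1] (1/2 - t) :=
        H hM1 hm1 (by linarith)
      have h2 : (tent s)^[k+1] (1/2 - t) ≤ (tent s)^[k+1] z := by
        rw [ez, hsymm t]
        exact H hm2 hM2 (by linarith)
      linarith
  exact tent_not_const s hs (k+1) (1/2 - t) (1/2) (by linarith)
    (fun z hz => (hconst z hz).trans (hconst _ ⟨le_refl _, by linarith⟩).symm)

/-- Exact expansion on a monotone branch. -/
lemma tent_expansion (s : ℝ) (hs : 0 < s) :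
    ∀ n (x y : ℝ), x ≤ y →
      (MonotoneOn ((tent s)^[n]) (Set.Icc x y) ∨
        AntitoneOn ((tent s)^[n]) (Set.Icc x y)) →
      ∀ k, k ≤ n → |(tent s)^[k] x - (tent s)^[k] y| = s ^ k * (y - x) := by
  intro n
  induction n with
  | zero =>
    intro x y hxy _ k hk
    interval_cases k
    have h0 : (0:ℝ) ≤ y - x := by linarith
    simp only [Function.iterate_zero_apply, pow_zero, one_mul]
    rw [abs_sub_comm, abs_of_nonneg h0]
  | succ n ih =>
    intro x y hxy H k hk
    rcases eq_or_lt_of_le hxy with rfl | hlt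
    · simp
    by_cases hy2 : y ≤ 1/2
    · -- left case
      have hx2 : x ≤ 1/2 := hlt.le.trans hy2
      have key : ∀ w ∈ Set.Icc (s * x) (s * y),
          w / s ∈ Set.Icc x y ∧ (tent s)^[n] w = (tent s)^[n+1] (w / s) := by
        intro w hw
        obtain ⟨hw1, hw2⟩ := hw
        have hzmem : w / s ∈ Set.Icc x y :=
          ⟨(le_div_iff₀ hs).2 (by linarith), (div_le_iff₀ hs).2 (by linarith)⟩
        have hTz : tent s (w / s) = w := by
          rw [tent_of_le s _ hs.le (hzmem.2.trans hy2)]; field_simp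
        exact ⟨hzmem, by rw [Function.iterate_succ_apply, hTz]⟩
      have H' : MonotoneOn ((tent s)^[n]) (Set.Icc (s*x) (s*y)) ∨
          AntitoneOn ((tent s)^[n]) (Set.Icc (s*x) (s*y)) := by
        rcases H with H | H
        · left; intro w1 h1 w2 h2 h12
          rw [(key w1 h1).2, (key w2 h2).2]
          exact H (key w1 h1).1 (key w2 h2).1 (by gcongr)
        · right; intro w1 h1 w2 h2 h12
          rw [(key w1 h1).2, (key w2 h2).2]
          exact H (key w1 h1).1 (key w2 h2).1 (by gcongr)
      have ihx := ih (s*x) (s*y) (by nlinarith) H'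
      match k, hk with
      | 0, _ =>
        have h0 : (0:ℝ) ≤ y - x := by linarith
        simp only [Function.iterate_zero_apply, pow_zero, one_mul]
        rw [abs_sub_comm, abs_of_nonneg h0]
      | (j+1), hk =>
        have hj : j ≤ n := Nat.succ_le_succ_iff.mp hk
        have e1 : (tent s)^[j+1] x = (tent s)^[j] (s * x) := by
          rw [Function.iterate_succ_apply, tent_of_le s x hs.le hx2]
        have e2 : (tent s)^[j+1] y = (tent s)^[j] (s * y) := by
          rw [Function.iterate_succ_apply, tent_of_le s y hs.le hy2]
        rw [e1, e2, ihx j hj]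
        ring
    · -- right case
      push_neg at hy2
      have hx2 : 1/2 ≤ x := by
        by_contra hx2
        push_neg at hx2
        exact tent_no_straddle s hs (n+1) (Nat.succ_le_succ (Nat.zero_le n)) x y hx2 hy2 H
      have key : ∀ w ∈ Set.Icc (s * (1 - y)) (s * (1 - x)),
          (1 - w / s) ∈ Set.Icc x y ∧ (tent s)^[n] w = (tent s)^[n+1] (1 - w / s) := by
        intro w hw
        obtain ⟨hw1, hw2⟩ := hw
        have h1 : x ≤ 1 - w / s := by
          have : w / s ≤ 1 - x := (div_le_iff₀ hs).2 (by linarith)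
          linarith
        have h2 : 1 - w / s ≤ y := by
          have : 1 - y ≤ w / s := (le_div_iff₀ hs).2 (by linarith)
          linarith
        have hTz : tent s (1 - w / s) = w := by
          rw [tent_of_ge s _ hs.le (hx2.trans h1)]; field_simp; ring
        exact ⟨⟨h1, h2⟩, by rw [Function.iterate_succ_apply, hTz]⟩
      have H' : MonotoneOn ((tent s)^[n]) (Set.Icc (s*(1-y)) (s*(1-x))) ∨
          AntitoneOn ((tent s)^[n]) (Set.Icc (s*(1-y)) (s*(1-x))) := by
        rcases H with H | H
        · right; intro w1 h1 w2 h2 h12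
          rw [(key w1 h1).2, (key w2 h2).2]
          have : 1 - w2 / s ≤ 1 - w1 / s := by
            have h : w1 / s ≤ w2 / s := by gcongr
            linarith
          exact H (key w2 h2).1 (key w1 h1).1 this
        · left; intro w1 h1 w2 h2 h12
          rw [(key w1 h1).2, (key w2 h2).2]
          have : 1 - w2 / s ≤ 1 - w1 / s := by
            have h : w1 / s ≤ w2 / s := by gcongr
            linarith
          exact H (key w2 h2).1 (key w1 h1).1 this
      have ihx := ih (s*(1-y)) (s*(1-x)) (by nlinarith) H'
      match k, hk with
      | 0, _ =>
        have h0 : (0:ℝ) ≤ y - x := by linarith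
        simp only [Function.iterate_zero_apply, pow_zero, one_mul]
        rw [abs_sub_comm, abs_of_nonneg h0]
      | (j+1), hk =>
        have hj : j ≤ n := Nat.succ_le_succ_iff.mp hk
        have e1 : (tent s)^[j+1] x = (tent s)^[j] (s * (1 - x)) := by
          rw [Function.iterate_succ_apply, tent_of_ge s x hs.le hx2]
        have e2 : (tent s)^[j+1] y = (tent s)^[j] (s * (1 - y)) := by
          rw [Function.iterate_succ_apply, tent_of_ge s y hs.le (hx2.trans hlt.le)]
        rw [e1, e2, abs_sub_comm, ihx j hj]
        ring

/-- If the critical point `c = 1/2` of `T_s`, `s ∈ (√2,2]`, is non-recurrent,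
then `T_s` is long-branched: there is `δ > 0` such that the images of any pair
of adjacent turning points of `T_s^n` are more than `δ` apart. -/
theorem nonrecurrent_implies_long_branched (s : ℝ)
    (hs : s ∈ Set.Ioc (Real.sqrt 2) 2)
    (hnr : ∃ ε > 0, ∀ n : ℕ, 1 ≤ n → ε ≤ |1/2 - (tent s)^[n] (1/2)|) :
    ∃ δ > 0, ∀ n : ℕ, ∀ x y : ℝ, AdjacentTurningPoints s n x y →
      δ < |(tent s)^[n] x - (tent s)^[n] y| := by
  obtain ⟨ε, hε, hrec⟩ := hnr
  have hs1 : 1 < s := by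
    have h2 : (1:ℝ) < Real.sqrt 2 := by
      rw [show (1:ℝ) = Real.sqrt 1 from (Real.sqrt_one).symm]
      exact Real.sqrt_lt_sqrt (by norm_num) (by norm_num)
    linarith [hs.1]
  have hs0 : 0 < s := by linarith
  refine ⟨ε, hε, ?_⟩
  rintro n x y ⟨hxy, ⟨mx, hmx, hmx2⟩, ⟨my, hmy, hmy2⟩, H⟩
  have hexp := tent_expansion s hs0 n x y hxy.le H
  have hyx : 0 < y - x := by linarith
  have hne : mx ≠ my := by
    intro e
    subst e
    have hd := hexp mx hmx.le
    rw [hmx2, hmy2, sub_self, abs_zero] at hd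
    have : 0 < s ^ mx * (y - x) := by positivity
    linarith
  -- reduce both cases to a common computation
  have main : ∀ M m' : ℕ, m' < M → M < n → |(tent s)^[M] x - (tent s)^[M] y| = s ^ M * (y - x) →
      ε ≤ s ^ M * (y - x) → ε < |(tent s)^[n] x - (tent s)^[n] y| := by
    intro M m' hm'M hMn hd hεd
    rw [hexp n le_rfl]
    have hpow : s ^ n = s ^ (n - M) * s ^ M := by
      rw [← pow_add]
      congr 1
      omega
    have h1 : s ≤ s ^ (n - M) := by
      calc s = s ^ 1 := (pow_one s).symm
        _ ≤ s ^ (n - M) := pow_le_pow_right₀ hs1.le (by omega)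
    have hB : s * ε ≤ s ^ (n - M) * ε := mul_le_mul_of_nonneg_right h1 hε.le
    have hC : s ^ (n - M) * ε ≤ s ^ (n - M) * (s ^ M * (y - x)) :=
      mul_le_mul_of_nonneg_left hεd (by positivity)
    have hD : ε < s * ε := by nlinarith
    rw [hpow, mul_assoc]
    linarith
  rcases hne.lt_or_gt with h | h
  · -- mx < my : use M = my, x's time mx
    have hiter : (tent s)^[my] x = (tent s)^[my - mx] (1/2) := by
      rw [← hmx2, ← Function.iterate_add_apply]
      congr 1
      omega
    have hd := hexp my hmy.le
    have hεd : ε ≤ s ^ my * (y - x) := by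
      rw [← hd, hmy2, hiter, abs_sub_comm, ← abs_sub_comm]
      calc ε ≤ |1/2 - (tent s)^[my - mx] (1/2)| := hrec (my - mx) (by omega)
        _ = |(tent s)^[my - mx] (1/2) - 1/2| := abs_sub_comm _ _
    exact main my mx h hmy hd hεd
  · -- my < mx
    have hiter : (tent s)^[mx] y = (tent s)^[mx - my] (1/2) := by
      rw [← hmy2, ← Function.iterate_add_apply]
      congr 1
      omega
    have hd := hexp mx hmx.le
    have hεd : ε ≤ s ^ mx * (y - x) := by
      rw [← hd, hmx2, hiter]
      exact hrec (mx - my) (by omega)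
    exact main mx my h hmx hd hεd
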